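/- J₁ is simple under the two operators: every subspace W ⊆ J₁ with A(W) ⊆ W and B(W) ⊆ W is either 0 or J₁. -/

import Mathlib

noncomputable section

/-- Index set for the GTA basis: `x⁺_s` (s = 1..p), `x⁻_s` (s = 1..p), `g_s` (s = 1..p-1). -/
abbrev GTAIdx (p : ℕ) := (Fin p ⊕ Fin p) ⊕ Fin (p - 1)

/-- The underlying (3p-1)-dimensional complex vector space. -/
abbrev GTA (p : ℕ) := GTAIdx p → ℂ

/-- `ε = exp(iπ/2p)`. -/
def eps (p : ℕ) : ℂ := Complex.exp (Real.pi * Complex.I / (2 * p))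

/-- The basis vector `x⁺_s` for `1 ≤ s ≤ p`, and `0` otherwise. -/
def xp (p : ℕ) (s : ℕ) : GTA p :=
  if h : 1 ≤ s ∧ s ≤ p then Pi.single (Sum.inl (Sum.inl ⟨s - 1, by omega⟩)) 1 else 0

/-- The basis vector `x⁻_s` for `1 ≤ s ≤ p`, and `0` otherwise. -/
def xm (p : ℕ) (s : ℕ) : GTA p :=
  if h : 1 ≤ s ∧ s ≤ p then Pi.single (Sum.inl (Sum.inr ⟨s - 1, by omega⟩)) 1 else 0

/-- The basis vector `g_s` for `1 ≤ s ≤ p-1`, and `0` otherwise. -/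
def gv (p : ℕ) (s : ℕ) : GTA p :=
  if h : 1 ≤ s ∧ s ≤ p - 1 then Pi.single (Sum.inr ⟨s - 1, by omega⟩) 1 else 0

/-- The quantum integer `[s] = (ε^{2s} - ε^{-2s})/(ε² - ε^{-2})`. -/
def br (p : ℕ) (s : ℕ) : ℂ :=
  ((eps p) ^ (2 * s) - (eps p)⁻¹ ^ (2 * s)) / ((eps p) ^ 2 - (eps p)⁻¹ ^ 2)

/-- The operator `A` (action of the curve `a`) in the GTA basis. -/
def Aop (p : ℕ) : Module.End ℂ (GTA p) :=
  (Pi.basisFun ℂ (GTAIdx p)).constr ℂ fun i =>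
    match i with
    | .inl (.inl i) =>
        (-((eps p) ^ (2 * (i.1 + 1)) + (eps p)⁻¹ ^ (2 * (i.1 + 1)))) • xp p (i.1 + 1)
    | .inl (.inr i) =>
        (((eps p) ^ (2 * (i.1 + 1)) + (eps p)⁻¹ ^ (2 * (i.1 + 1)))) • xm p (i.1 + 1)
    | .inr i =>
        (-((eps p) ^ (2 * (i.1 + 1)) + (eps p)⁻¹ ^ (2 * (i.1 + 1)))) • gv p (i.1 + 1)
          - (((eps p) ^ 2 - (eps p)⁻¹ ^ 2) ^ 2) • (xp p (i.1 + 1) + xm p (p - (i.1 + 1)))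

/-- The operator `B` (action of the curve `b`) in the GTA basis. -/
def Bop (p : ℕ) : Module.End ℂ (GTA p) :=
  (Pi.basisFun ℂ (GTAIdx p)).constr ℂ fun i =>
    match i with
    | .inl (.inl i) =>
        if i.1 + 1 = p then (2 : ℂ) • xp p (p - 1) + (2 : ℂ) • xm p 1
        else xp p i.1 + xp p (i.1 + 2)
    | .inl (.inr i) =>
        if i.1 + 1 = p then (2 : ℂ) • xm p (p - 1) + (2 : ℂ) • xp p 1
        else xm p i.1 + xm p (i.1 + 2)
    | .inr i =>
        (br p i.1 / br p (i.1 + 1)) • gv p i.1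
          + (br p (i.1 + 2) / br p (i.1 + 1)) • gv p (i.1 + 2)

/-- `J₁`: the span of the vectors `x⁺_s + x⁻_{p-s}` (1 ≤ s ≤ p-1), `x⁺_p` and `x⁻_p`. -/
def J1 (p : ℕ) : Submodule ℂ (GTA p) :=
  Submodule.span ℂ
    ((Set.range fun s : Fin (p - 1) => xp p (s.1 + 1) + xm p (p - (s.1 + 1)))
      ∪ {xp p p, xm p p})

/-- `J₂ = J₁ + span{x⁺_s : 1 ≤ s ≤ p-1}`. -/
def J2 (p : ℕ) : Submodule ℂ (GTA p) :=
  J1 p ⊔ Submodule.span ℂ (Set.range fun s : Fin (p - 1) => xp p (s.1 + 1))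

end

-- experiments
noncomputable section
variable (p : ℕ)

lemma eps_ne_zero : eps p ≠ 0 := Complex.exp_ne_zero _

lemma eps_pow_two_p (hp : 2 ≤ p) : (eps p) ^ (2 * p) = -1 := by
  rw [eps, ← Complex.exp_nat_mul]
  have hp0 : (p : ℂ) ≠ 0 := Nat.cast_ne_zero.mpr (by omega)
  rw [show ((2 * p : ℕ) : ℂ) * (Real.pi * Complex.I / (2 * p)) = Real.pi * Complex.I by
    push_cast; field_simp]
  exact Complex.exp_pi_mul_I

lemma eps_pow_ne_one (hp : 2 ≤ p) {m : ℕ} (h0 : 0 < m) (h1 : m < 2 * p) :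
    (eps p) ^ (2 * m) ≠ 1 := by
  rw [eps, ← Complex.exp_nat_mul]
  intro h
  rw [Complex.exp_eq_one_iff] at h
  obtain ⟨n, hn⟩ := h
  have hp0 : (p : ℂ) ≠ 0 := Nat.cast_ne_zero.mpr (by omega)
  have hπ : (Real.pi : ℂ) ≠ 0 := by exact_mod_cast Real.pi_ne_zero
  have hI : Complex.I ≠ 0 := Complex.I_ne_zero
  have key : (m : ℂ) = 2 * n * p := by
    have := hn
    field_simp at this
    have h2 : (m : ℂ) * (Real.pi * Complex.I) = (2 * n * p) * (Real.pi * Complex.I) := by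
      push_cast at this ⊢
      linear_combination (↑Real.pi * Complex.I) * this / 2
    exact mul_right_cancel₀ (mul_ne_zero hπ hI) h2
  have key' : (m : ℤ) = 2 * n * p := by exact_mod_cast key
  have hpz : (2 : ℤ) ≤ (p : ℤ) := by exact_mod_cast hp
  have hmz : (0 : ℤ) < (m : ℤ) := by exact_mod_cast h0
  have hmz2 : (m : ℤ) < 2 * (p : ℤ) := by exact_mod_cast h1
  rcases le_or_gt n 0 with h | h
  · nlinarith
  · nlinarith

def mup (p k : ℕ) : ℂ := -((eps p) ^ (2 * k) + (eps p)⁻¹ ^ (2 * k))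

lemma mup_inj (hp : 2 ≤ p) {j k : ℕ} (hjk : j < k) (hk : k ≤ p) : mup p j ≠ mup p k := by
  intro h
  have hu : eps p ≠ 0 := eps_ne_zero p
  have haz : (eps p) ^ (2 * j) ≠ 0 := pow_ne_zero _ hu
  have hbz : (eps p) ^ (2 * k) ≠ 0 := pow_ne_zero _ hu
  rw [mup, mup, neg_inj, inv_pow, inv_pow] at h
  have key : ((eps p) ^ (2 * j) - (eps p) ^ (2 * k)) *
      ((eps p) ^ (2 * j) * (eps p) ^ (2 * k) - 1) = 0 := by
    field_simp at h
    linear_combination h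
  rcases mul_eq_zero.mp key with h1 | h1
  · have hab : (eps p) ^ (2 * j) = (eps p) ^ (2 * k) := sub_eq_zero.mp h1
    have hone : (eps p) ^ (2 * (k - j)) = 1 := by
      have h2 : (eps p) ^ (2 * j) * (eps p) ^ (2 * (k - j)) = (eps p) ^ (2 * j) * 1 := by
        rw [mul_one, ← pow_add, show 2 * j + 2 * (k - j) = 2 * k from by omega, hab]
      exact mul_left_cancel₀ haz h2
    exact eps_pow_ne_one p hp (by omega) (by omega) hone
  · have hone : (eps p) ^ (2 * (j + k)) = 1 := by
      rw [show 2 * (j + k) = 2 * j + 2 * k from by ring, pow_add]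
      linear_combination h1
    exact eps_pow_ne_one p hp (by omega) (by omega) hone

-- basis vectors
lemma xp_zero : xp p 0 = 0 := dif_neg (by omega)
lemma xm_zero : xm p 0 = 0 := dif_neg (by omega)

lemma Aop_xp {s : ℕ} (h1 : 1 ≤ s) (h2 : s ≤ p) :
    Aop p (xp p s) = mup p s • xp p s := by
  conv_lhs => rw [show xp p s = Pi.single (Sum.inl (Sum.inl (⟨s - 1, by omega⟩ : Fin p))) 1 from
    dif_pos ⟨h1, h2⟩, ← Pi.basisFun_apply, Aop, Module.Basis.constr_basis]
  show (-((eps p) ^ (2 * (s - 1 + 1)) + (eps p)⁻¹ ^ (2 * (s - 1 + 1)))) • xp p (s - 1 + 1) = _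
  rw [show s - 1 + 1 = s from by omega, mup]

lemma Aop_xm {s : ℕ} (h1 : 1 ≤ s) (h2 : s ≤ p) :
    Aop p (xm p s) = (-(mup p s)) • xm p s := by
  conv_lhs => rw [show xm p s = Pi.single (Sum.inl (Sum.inr (⟨s - 1, by omega⟩ : Fin p))) 1 from
    dif_pos ⟨h1, h2⟩, ← Pi.basisFun_apply, Aop, Module.Basis.constr_basis]
  show (((eps p) ^ (2 * (s - 1 + 1)) + (eps p)⁻¹ ^ (2 * (s - 1 + 1)))) • xm p (s - 1 + 1) = _
  rw [show s - 1 + 1 = s from by omega, mup, neg_neg]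

lemma Bop_xp_mid {s : ℕ} (h1 : 1 ≤ s) (h2 : s ≤ p - 1) :
    Bop p (xp p s) = xp p (s - 1) + xp p (s + 1) := by
  conv_lhs => rw [show xp p s = Pi.single (Sum.inl (Sum.inl (⟨s - 1, by omega⟩ : Fin p))) 1 from
    dif_pos ⟨h1, by omega⟩, ← Pi.basisFun_apply, Bop, Module.Basis.constr_basis]
  show (if s - 1 + 1 = p then _ else xp p (s - 1) + xp p (s - 1 + 2)) = _
  rw [if_neg (by omega), show s - 1 + 2 = s + 1 from by omega]

lemma Bop_xm_mid {s : ℕ} (h1 : 1 ≤ s) (h2 : s ≤ p - 1) :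
    Bop p (xm p s) = xm p (s - 1) + xm p (s + 1) := by
  conv_lhs => rw [show xm p s = Pi.single (Sum.inl (Sum.inr (⟨s - 1, by omega⟩ : Fin p))) 1 from
    dif_pos ⟨h1, by omega⟩, ← Pi.basisFun_apply, Bop, Module.Basis.constr_basis]
  show (if s - 1 + 1 = p then _ else xm p (s - 1) + xm p (s - 1 + 2)) = _
  rw [if_neg (by omega), show s - 1 + 2 = s + 1 from by omega]

lemma Bop_xp_top (hp : 1 ≤ p) :
    Bop p (xp p p) = (2 : ℂ) • xp p (p - 1) + (2 : ℂ) • xm p 1 := by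
  conv_lhs => rw [show xp p p = Pi.single (Sum.inl (Sum.inl (⟨p - 1, by omega⟩ : Fin p))) 1 from
    dif_pos ⟨hp, le_rfl⟩, ← Pi.basisFun_apply, Bop, Module.Basis.constr_basis]
  show (if p - 1 + 1 = p then (2 : ℂ) • xp p (p - 1) + (2 : ℂ) • xm p 1 else _) = _
  rw [if_pos (by omega)]

lemma Bop_xm_top (hp : 1 ≤ p) :
    Bop p (xm p p) = (2 : ℂ) • xm p (p - 1) + (2 : ℂ) • xp p 1 := by
  conv_lhs => rw [show xm p p = Pi.single (Sum.inl (Sum.inr (⟨p - 1, by omega⟩ : Fin p))) 1 from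
    dif_pos ⟨hp, le_rfl⟩, ← Pi.basisFun_apply, Bop, Module.Basis.constr_basis]
  show (if p - 1 + 1 = p then (2 : ℂ) • xm p (p - 1) + (2 : ℂ) • xp p 1 else _) = _
  rw [if_pos (by omega)]


def ee (p k : ℕ) : GTA p := xp p k + xm p (p - k)

lemma Aop_ee (hp : 2 ≤ p) {k : ℕ} (hk : k ≤ p) : Aop p (ee p k) = mup p k • ee p k := by
  have hm1 : (eps p) ^ (2 * p) = -1 := eps_pow_two_p p hp
  rcases Nat.eq_zero_or_pos k with rfl | hk0
  · rw [ee, xp_zero, zero_add, Nat.sub_zero, Aop_xm p (by omega) le_rfl]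
    congr 1
    rw [mup, mup, inv_pow, inv_pow, hm1, mul_zero, pow_zero]
    norm_num
  rcases eq_or_lt_of_le hk with heq | hklt
  · rw [heq, ee, Nat.sub_self, xm_zero, add_zero, Aop_xp p (by omega) le_rfl]
  · have hpk1 : 1 ≤ p - k := by omega
    have hpkp : p - k ≤ p := by omega
    rw [ee, map_add, Aop_xp p hk0 hk, Aop_xm p hpk1 hpkp, smul_add]
    congr 2
    have hprod : (eps p) ^ (2 * (p - k)) * (eps p) ^ (2 * k) = -1 := by
      rw [← pow_add, show 2 * (p - k) + 2 * k = 2 * p from by omega, hm1]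
    have hx : (eps p) ^ (2 * k) ≠ 0 := pow_ne_zero _ (eps_ne_zero p)
    have hy' : (eps p) ^ (2 * (p - k)) = -((eps p) ^ (2 * k))⁻¹ := by
      field_simp
      linear_combination hprod
    rw [mup, mup, inv_pow, inv_pow, neg_neg, hy', inv_neg, inv_inv]
    ring

lemma Bop_ee_bot (hp : 2 ≤ p) : Bop p (ee p 0) = (2 : ℂ) • ee p 1 := by
  rw [ee, xp_zero, zero_add, Nat.sub_zero, Bop_xm_top p (by omega), ee, smul_add]
  rw [add_comm]

lemma Bop_ee_top (hp : 2 ≤ p) : Bop p (ee p p) = (2 : ℂ) • ee p (p - 1) := by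
  rw [ee, Nat.sub_self, xm_zero, add_zero, Bop_xp_top p (by omega), ee, smul_add,
    show p - (p - 1) = 1 from by omega]

lemma Bop_ee_mid (hp : 2 ≤ p) {k : ℕ} (h1 : 1 ≤ k) (h2 : k ≤ p - 1) :
    Bop p (ee p k) = ee p (k - 1) + ee p (k + 1) := by
  rw [ee, map_add, Bop_xp_mid p h1 h2, Bop_xm_mid p (by omega) (by omega), ee, ee,
    show p - (k - 1) = p - k + 1 from by omega, show p - (k + 1) = p - k - 1 from by omega]
  abel


open Finset in
lemma extract (hp : 2 ≤ p) (W : Submodule ℂ (GTA p)) (hA : ∀ v ∈ W, Aop p v ∈ W) :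
    ∀ (S : Finset (Fin (p + 1))) (c : Fin (p + 1) → ℂ),
      (∑ j ∈ S, c j • ee p j.1) ∈ W → ∀ k ∈ S, c k ≠ 0 → ee p k.1 ∈ W := by
  intro S
  induction S using Finset.strongInduction with
  | _ S ih =>
    intro c hw k hk hc
    by_cases hS : ∃ l ∈ S, l ≠ k
    · obtain ⟨l, hl, hlk⟩ := hS
      have hmem : Aop p (∑ j ∈ S, c j • ee p j.1) - mup p l.1 • (∑ j ∈ S, c j • ee p j.1) ∈ W :=
        W.sub_mem (hA _ hw) (W.smul_mem _ hw)
      have hAw : Aop p (∑ j ∈ S, c j • ee p j.1) = ∑ j ∈ S, c j • (mup p j.1 • ee p j.1) := by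
        rw [map_sum]
        refine Finset.sum_congr rfl fun j _ => ?_
        rw [map_smul, Aop_ee p hp (by omega)]
      have hkey : (∑ j ∈ S.erase l, (c j * (mup p j.1 - mup p l.1)) • ee p j.1)
          = Aop p (∑ j ∈ S, c j • ee p j.1) - mup p l.1 • (∑ j ∈ S, c j • ee p j.1) := by
        rw [hAw, Finset.smul_sum, ← Finset.sum_sub_distrib,
          Finset.sum_erase _ (by simp)]
        refine Finset.sum_congr rfl fun j _ => ?_
        rw [mul_sub, sub_smul, smul_smul, smul_smul, mul_comm (mup p l.1) (c j)]
      have hne : mup p k.1 ≠ mup p l.1 := by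
        rcases lt_trichotomy k.1 l.1 with h | h | h
        · exact fun hh => mup_inj p hp h (by omega) hh
        · exact absurd (Fin.ext h) hlk.symm
        · exact fun hh => mup_inj p hp h (by omega) hh.symm
      exact ih (S.erase l) (Finset.erase_ssubset hl) _ (hkey ▸ hmem) k
        (Finset.mem_erase.mpr ⟨fun hh => hlk hh.symm, hk⟩)
        (mul_ne_zero hc (sub_ne_zero.mpr hne))
    · push_neg at hS
      have hSk : S = {k} := Finset.eq_singleton_iff_unique_mem.mpr ⟨hk, fun x hx => hS x hx⟩
      rw [hSk, Finset.sum_singleton] at hw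
      have := W.smul_mem (c k)⁻¹ hw
      rwa [smul_smul, inv_mul_cancel₀ hc, one_smul] at this

lemma two_smul_mem (W : Submodule ℂ (GTA p)) {v : GTA p} (h : (2 : ℂ) • v ∈ W) : v ∈ W := by
  have := W.smul_mem (2 : ℂ)⁻¹ h
  rwa [smul_smul, inv_mul_cancel₀ (by norm_num), one_smul] at this

lemma pair_extract (hp : 2 ≤ p) (W : Submodule ℂ (GTA p)) (hA : ∀ v ∈ W, Aop p v ∈ W)
    {a b : ℕ} (ha : a ≤ p) (hb : b ≤ p) (hab : a ≠ b)
    (h : ee p a + ee p b ∈ W) : ee p b ∈ W := by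
  have haf : (⟨a, by omega⟩ : Fin (p + 1)) ≠ ⟨b, by omega⟩ := by
    simp only [ne_eq, Fin.mk.injEq]; exact hab
  have hsum : (∑ j ∈ ({⟨a, by omega⟩, ⟨b, by omega⟩} : Finset (Fin (p + 1))),
      (fun _ : Fin (p + 1) => (1 : ℂ)) j • ee p j.1) ∈ W := by
    rw [Finset.sum_pair haf]
    simpa using h
  have := extract p hp W hA _ _ hsum ⟨b, by omega⟩
    (Finset.mem_insert_of_mem (Finset.mem_singleton_self _)) one_ne_zero
  simpa using this

lemma step_up (hp : 2 ≤ p) (W : Submodule ℂ (GTA p)) (hA : ∀ v ∈ W, Aop p v ∈ W)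
    (hB : ∀ v ∈ W, Bop p v ∈ W) {k : ℕ} (hk : k < p) (h : ee p k ∈ W) : ee p (k + 1) ∈ W := by
  have hBk := hB _ h
  rcases Nat.eq_zero_or_pos k with rfl | hk0
  · rw [Bop_ee_bot p hp] at hBk
    exact two_smul_mem p W hBk
  · rw [Bop_ee_mid p hp hk0 (by omega)] at hBk
    exact pair_extract p hp W hA (by omega) (by omega) (by omega) hBk

lemma step_down (hp : 2 ≤ p) (W : Submodule ℂ (GTA p)) (hA : ∀ v ∈ W, Aop p v ∈ W)
    (hB : ∀ v ∈ W, Bop p v ∈ W) {k : ℕ} (hk0 : 1 ≤ k) (hk : k ≤ p) (h : ee p k ∈ W) :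
    ee p (k - 1) ∈ W := by
  have hBk := hB _ h
  rcases eq_or_lt_of_le hk with heq | hlt
  · rw [heq] at hBk ⊢
    rw [Bop_ee_top p hp] at hBk
    exact two_smul_mem p W hBk
  · rw [Bop_ee_mid p hp hk0 (by omega)] at hBk
    rw [add_comm] at hBk
    exact pair_extract p hp W hA (by omega) (by omega) (by omega) hBk

lemma J1_eq (hp : 2 ≤ p) :
    J1 p = Submodule.span ℂ (Set.range fun k : Fin (p + 1) => ee p k.1) := by
  rw [J1]
  congr 1
  ext x
  constructor
  · rintro (⟨s, rfl⟩ | hx)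
    · exact ⟨⟨s.1 + 1, by omega⟩, rfl⟩
    · rcases hx with rfl | rfl
      · refine ⟨⟨p, by omega⟩, ?_⟩
        show ee p p = xp p p
        rw [ee, Nat.sub_self, xm_zero, add_zero]
      · refine ⟨⟨0, by omega⟩, ?_⟩
        show ee p 0 = xm p p
        rw [ee, xp_zero, zero_add, Nat.sub_zero]
  · rintro ⟨k, rfl⟩
    simp only [Set.mem_union, Set.mem_insert_iff, Set.mem_singleton_iff, Set.mem_range]
    rcases Nat.eq_zero_or_pos k.1 with h0 | h1
    · right; right
      show ee p k.1 = xm p p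
      rw [h0, ee, xp_zero, zero_add, Nat.sub_zero]
    · rcases eq_or_lt_of_le (show k.1 ≤ p from by omega) with heq | hlt
      · right; left
        show ee p k.1 = xp p p
        rw [heq, ee, Nat.sub_self, xm_zero, add_zero]
      · left
        refine ⟨⟨k.1 - 1, by omega⟩, ?_⟩
        show xp p (k.1 - 1 + 1) + xm p (p - (k.1 - 1 + 1)) = ee p k.1
        rw [show k.1 - 1 + 1 = k.1 from by omega, ee]

end



/-- `J₁` is simple under the two operators `A`, `B`: every subspace of `J₁`
invariant under `A` and `B` is `0` or `J₁`. -/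
theorem stmt11 (p : ℕ) (hp : 2 ≤ p) :
    ∀ W : Submodule ℂ (GTA p), W ≤ J1 p →
      (∀ v ∈ W, Aop p v ∈ W) → (∀ v ∈ W, Bop p v ∈ W) →
      W = ⊥ ∨ W = J1 p := by
  intro W hle hA hB
  by_cases hbot : W = ⊥
  · exact Or.inl hbot
  right
  obtain ⟨w, hwW, hw0⟩ := (Submodule.ne_bot_iff W).mp hbot
  have hJ := J1_eq p hp
  have hw' : w ∈ Submodule.span ℂ (Set.range fun k : Fin (p + 1) => ee p k.1) := by
    rw [← hJ]; exact hle hwW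
  obtain ⟨c, hc⟩ := (Submodule.mem_span_range_iff_exists_fun ℂ).mp hw'
  have hex : ∃ k, c k ≠ 0 := by
    by_contra h
    push_neg at h
    apply hw0
    rw [← hc]
    simp [h]
  obtain ⟨k, hck⟩ := hex
  have hsum : (∑ j ∈ Finset.univ, c j • ee p j.1) ∈ W := by
    have : (∑ j ∈ Finset.univ, c j • ee p j.1) = w := hc
    rw [this]; exact hwW
  have hek : ee p k.1 ∈ W := extract p hp W hA Finset.univ c hsum k (Finset.mem_univ k) hck
  have h0 : ee p 0 ∈ W := by
    have hstep : ∀ i, i ≤ k.1 → ee p (k.1 - i) ∈ W := by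
      intro i
      induction i with
      | zero => intro _; simpa using hek
      | succ n ihn =>
        intro hn
        have h1 := ihn (by omega)
        have h2 := step_down p hp W hA hB (k := k.1 - n) (by omega) (by omega) h1
        rwa [show k.1 - n - 1 = k.1 - (n + 1) from by omega] at h2
    have hfin := hstep k.1 le_rfl
    rwa [Nat.sub_self] at hfin
  have hall : ∀ j, j ≤ p → ee p j ∈ W := by
    intro j
    induction j with
    | zero => intro _; exact h0
    | succ n ihn => intro hn; exact step_up p hp W hA hB (by omega) (ihn (by omega))
  apply le_antisymm hle
  rw [hJ, Submodule.span_le]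
  rintro x ⟨j, rfl⟩
  exact hall j.1 (by omega)
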